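/- For m ≥ 1 and k ∈ {1,…,m}, it holds that ∑_{l=1}^m l·sin(kπl/(m+1)) = (−1)^{k+1}·((m+1)/2)·cos(kπ/(2(m+1)))/sin(kπ/(2(m+1))). -/

import Mathlib

open Real Finset

lemma aux_sum (x : ℝ) (n : ℕ) :
    4 * Real.sin x ^ 2 * ∑ l ∈ Finset.Icc 1 n, (l : ℝ) * Real.sin ((l : ℝ) * (2 * x)) =
      ((n : ℝ) + 1) * Real.sin ((n : ℝ) * (2 * x)) - (n : ℝ) * Real.sin (((n : ℝ) + 1) * (2 * x)) := by
  induction n with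
  | zero => simp
  | succ n ih =>
    rw [Finset.sum_Icc_succ_top (by omega), mul_add, ih]
    push_cast
    have h1 : Real.sin (((n : ℝ) + 1 + 1) * (2 * x)) =
        Real.sin (((n : ℝ) + 1) * (2 * x)) * Real.cos (2 * x) +
          Real.cos (((n : ℝ) + 1) * (2 * x)) * Real.sin (2 * x) := by
      rw [show ((n : ℝ) + 1 + 1) * (2 * x) = ((n : ℝ) + 1) * (2 * x) + 2 * x by ring,
        Real.sin_add]
    have h2 : Real.sin ((n : ℝ) * (2 * x)) =
        Real.sin (((n : ℝ) + 1) * (2 * x)) * Real.cos (2 * x) -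
          Real.cos (((n : ℝ) + 1) * (2 * x)) * Real.sin (2 * x) := by
      rw [show ((n : ℝ)) * (2 * x) = ((n : ℝ) + 1) * (2 * x) - 2 * x by ring,
        Real.sin_sub]
    have h3 : Real.cos (2 * x) = 1 - 2 * Real.sin x ^ 2 := by
      rw [Real.cos_two_mul]
      nlinarith [Real.sin_sq_add_cos_sq x]
    rw [h1, h2, h3]
    ring

theorem stmt_4 (m k : ℕ) (hm : 1 ≤ m) (hk1 : 1 ≤ k) (hk2 : k ≤ m) :
    ∑ l ∈ Finset.Icc 1 m, (l : ℝ) * Real.sin ((k : ℝ) * π * l / ((m : ℝ) + 1)) =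
      (-1 : ℝ) ^ (k + 1) * (((m : ℝ) + 1) / 2) *
        Real.cos ((k : ℝ) * π / (2 * ((m : ℝ) + 1))) /
          Real.sin ((k : ℝ) * π / (2 * ((m : ℝ) + 1))) := by
  set x : ℝ := (k : ℝ) * π / (2 * ((m : ℝ) + 1)) with hx
  have hm1 : ((m : ℝ) + 1) ≠ 0 := by positivity
  have hm1' : (0 : ℝ) < (m : ℝ) + 1 := by positivity
  have hxpos : 0 < x := by
    apply div_pos
    · have : (0 : ℝ) < (k : ℝ) := by exact_mod_cast hk1
      positivity
    · positivity
  have hxlt : x < π := by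
    rw [hx, div_lt_iff₀ (by positivity)]
    have hkm : (k : ℝ) ≤ (m : ℝ) := by exact_mod_cast hk2
    nlinarith [Real.pi_pos]
  have hs : 0 < Real.sin x := Real.sin_pos_of_pos_of_lt_pi hxpos hxlt
  -- rewrite summand
  have hsum : ∑ l ∈ Finset.Icc 1 m, (l : ℝ) * Real.sin ((k : ℝ) * π * l / ((m : ℝ) + 1)) =
      ∑ l ∈ Finset.Icc 1 m, (l : ℝ) * Real.sin ((l : ℝ) * (2 * x)) := by
    apply Finset.sum_congr rfl
    intro l _
    congr 2
    rw [hx]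
    field_simp
  have key := aux_sum x m
  rw [← hsum] at key
  have e1 : ((m : ℝ) + 1) * (2 * x) = (k : ℝ) * π := by
    rw [hx]; field_simp
  have e2 : ((m : ℝ)) * (2 * x) = (k : ℝ) * π - 2 * x := by
    rw [hx]; field_simp; ring
  rw [e1, e2] at key
  have z1 : Real.sin ((k : ℝ) * π) = 0 := Real.sin_nat_mul_pi k
  have z2 : Real.sin ((k : ℝ) * π - 2 * x) = -((-1 : ℝ) ^ k * Real.sin (2 * x)) :=
    Real.sin_nat_mul_pi_sub (2 * x) k
  rw [z1, z2, Real.sin_two_mul] at key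
  have hs' : Real.sin x ≠ 0 := ne_of_gt hs
  have hneg : ((-1 : ℝ) ^ (k + 1)) = -(-1 : ℝ) ^ k := by rw [pow_succ]; ring
  rw [hneg]
  field_simp
  have hS : ∑ x ∈ Finset.Icc 1 m, (x : ℝ) * Real.sin ((x : ℝ) * k * π / ((m : ℝ) + 1)) =
      ∑ l ∈ Finset.Icc 1 m, (l : ℝ) * Real.sin ((k : ℝ) * π * l / ((m : ℝ) + 1)) := by
    apply Finset.sum_congr rfl
    intro l _
    ring_nf
  rw [hS]
  apply mul_left_cancel₀ hs'
  linear_combination key / 2
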